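/- In the logistic regression setup, for every dimension d > 1, every n ≥ 1, every c > 0, and every β > 0, there exist neighboring datasets D and D' of size n, whose feature vectors all satisfy ‖xᵢ‖₂ ≤ c, and a threshold λ₀ such that for every integer λ > λ₀, the Rényi divergence of order λ between the posteriors satisfies D_λ(p(·|D) ‖ p(·|D')) > c²·(λ − 1)/(2nβ). -/

import Mathlib

/-!
STATEMENT 15: In the logistic regression setup, for every `d > 1`, `n ≥ 1`, `c > 0` and
`β > 0` (prior `N(0, σ²I)` with `σ² = 1/(nβ)`), there exist neighboring datasets `D`, `D'`
of size `n` whose features satisfy `‖xᵢ‖ ≤ c` (and labels in `{−1, 1}`), and a threshold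
`λ₀`, such that for every integer `λ > λ₀`,
`D_λ(p(·|D) ‖ p(·|D')) > c²·(λ − 1)/(2nβ)`.
-/

open MeasureTheory ENNReal
open scoped RealInnerProductSpace

variable {d n : ℕ}

/-- Unnormalized logistic-regression posterior density with Gaussian prior variance
`σsq`: `exp(−‖w‖²/(2σ²))·∏ᵢ 1/(1 + exp(−yᵢ⟨w, xᵢ⟩))`. -/
noncomputable def logisticUnnormPost (σsq : ℝ)
    (D : Fin n → EuclideanSpace ℝ (Fin d) × ℝ) (w : EuclideanSpace ℝ (Fin d)) : ℝ :=
  Real.exp (-‖w‖ ^ 2 / (2 * σsq)) * ∏ i, (1 + Real.exp (-(D i).2 * ⟪w, (D i).1⟫))⁻¹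

/-- Normalized logistic-regression posterior density (w.r.t. Lebesgue measure),
as an `ℝ≥0∞`-valued density. -/
noncomputable def logisticPostDens (σsq : ℝ)
    (D : Fin n → EuclideanSpace ℝ (Fin d) × ℝ) (w : EuclideanSpace ℝ (Fin d)) : ℝ≥0∞ :=
  ENNReal.ofReal (logisticUnnormPost σsq D w) /
    ∫⁻ w', ENNReal.ofReal (logisticUnnormPost σsq D w')

/-- Two datasets are neighboring if they differ in exactly one example. -/
def Neighboring (D D' : Fin n → EuclideanSpace ℝ (Fin d) × ℝ) : Prop :=
  ∃ j, (∀ i, i ≠ j → D i = D' i) ∧ D j ≠ D' j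

/-- Rényi divergence of order `l > 1` between measures given by densities `p`, `q`
with respect to a common dominating measure `ν`, with value `+∞` if the integral
diverges. -/
noncomputable def renyiDiv {Ω : Type*} [MeasurableSpace Ω] (ν : Measure Ω)
    (p q : Ω → ℝ≥0∞) (l : ℝ) : EReal :=
  (((l - 1)⁻¹ : ℝ) : EReal) * ENNReal.log (∫⁻ ω, p ω ^ l * q ω ^ (1 - l) ∂ν)

/-! ### Auxiliary lemmas -/

private lemma ereal_mul_lt_mul (r b : ℝ) (hr : 0 < r) {x : EReal} (h : (b : EReal) < x) :
    ((r * b : ℝ) : EReal) < (r : EReal) * x := by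
  induction x using EReal.rec with
  | bot => exact absurd h (by simp)
  | coe y =>
      rw [← EReal.coe_mul]
      exact EReal.coe_lt_coe_iff.mpr (mul_lt_mul_of_pos_left (EReal.coe_lt_coe_iff.mp h) hr)
  | top =>
      rw [EReal.coe_mul_top_of_pos hr]
      exact EReal.coe_lt_top _

private lemma gauss_integrable {b : ℝ} (hb : 0 < b) :
    Integrable (fun w : EuclideanSpace ℝ (Fin d) => Real.exp (-b * ‖w‖ ^ 2)) := by
  have h := (GaussianFourier.integrable_cexp_neg_mul_sq_norm_add
      (V := EuclideanSpace ℝ (Fin d)) (b := (b : ℂ)) (by simpa using hb) 0 0).norm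
  refine h.congr ?_
  filter_upwards with w
  rw [Complex.norm_exp]
  simp [← Complex.ofReal_pow, ← Complex.ofReal_mul]

private noncomputable def Afun (c t : ℝ) : ℝ := (1 + Real.exp (-(c * t)))⁻¹

private lemma Afun_pos (c t : ℝ) : 0 < Afun c t := by unfold Afun; positivity

private lemma Afun_le_one (c t : ℝ) : Afun c t ≤ 1 := by
  unfold Afun
  rw [inv_le_one_iff₀]
  right; nlinarith [Real.exp_pos (-(c*t))]

private lemma Afun_lt {c s t : ℝ} (hc : 0 < c) (h : s < t) : Afun c s < Afun c t := by
  unfold Afun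
  have h1 : Real.exp (-(c*t)) < Real.exp (-(c*s)) := Real.exp_lt_exp.mpr (by nlinarith)
  have h2 : 0 < 1 + Real.exp (-(c*t)) := by positivity
  exact inv_strictAnti₀ h2 (by linarith)

private lemma Afun_ratio (c t : ℝ) : Afun c t / Afun c (-t) = Real.exp (c * t) := by
  unfold Afun
  rw [mul_neg, neg_neg, div_eq_iff (by positivity)]
  have h2 : Real.exp (c*t) * Real.exp (-(c*t)) = 1 := by
    rw [← Real.exp_add]; simp
  have h3 : (0:ℝ) < 1 + Real.exp (-(c*t)) := by positivity
  have h4 : (0:ℝ) < 1 + Real.exp (c*t) := by positivity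
  field_simp
  nlinarith [Real.exp_pos (c*t), Real.exp_pos (-(c*t))]

private lemma Afun_cont (c : ℝ) : Continuous (Afun c) := by
  apply Continuous.inv₀
  · fun_prop
  · intro t; positivity

private noncomputable def Ffun (n : ℕ) (a c : ℝ) (i0 : Fin d) (m : ℝ)
    (w : EuclideanSpace ℝ (Fin d)) : ℝ :=
  Real.exp (-(a/2) * ‖w‖ ^ 2) * (Afun c (w i0 + m) * (2:ℝ)⁻¹ ^ (n-1))

private lemma Ffun_pos (n : ℕ) (a c : ℝ) (i0 : Fin d) (m : ℝ) (w) :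
    0 < Ffun n a c i0 m w := by
  unfold Ffun
  have := Afun_pos c (w i0 + m)
  positivity

private lemma Ffun_meas (n : ℕ) (a c : ℝ) (i0 : Fin d) (m : ℝ) :
    Measurable fun w => ENNReal.ofReal (Ffun n a c i0 m w) := by
  apply Measurable.ennreal_ofReal
  apply Continuous.measurable
  unfold Ffun
  apply Continuous.mul
  · fun_prop
  · exact (((Afun_cont c).comp ((by fun_prop : Continuous fun w : EuclideanSpace ℝ (Fin d) => w i0).add continuous_const)).mul
      continuous_const)

private lemma Gshift_meas (n : ℕ) (a c : ℝ) (i0 : Fin d) (m : ℝ) :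
    Measurable fun w : EuclideanSpace ℝ (Fin d) => ENNReal.ofReal
      (Real.exp (-(a/2) * ‖w - m • EuclideanSpace.single i0 (1:ℝ)‖ ^ 2) *
        (Afun c (w i0) * (2:ℝ)⁻¹ ^ (n-1))) := by
  apply Measurable.ennreal_ofReal
  apply Continuous.measurable
  apply Continuous.mul
  · fun_prop
  · exact (((Afun_cont c).comp (by fun_prop : Continuous fun w : EuclideanSpace ℝ (Fin d) => w i0)).mul continuous_const)

private lemma Ffun_lintegral_lt_top (n : ℕ) {a : ℝ} (c : ℝ) (i0 : Fin d) (m : ℝ)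
    (ha : 0 < a) : ∫⁻ w, ENNReal.ofReal (Ffun n a c i0 m w) < ⊤ := by
  have hK : (2:ℝ)⁻¹ ^ (n-1) ≤ 1 := by
    apply pow_le_one₀ <;> norm_num
  calc ∫⁻ w, ENNReal.ofReal (Ffun n a c i0 m w)
      ≤ ∫⁻ w : EuclideanSpace ℝ (Fin d), ENNReal.ofReal (Real.exp (-(a/2) * ‖w‖ ^ 2)) := by
        apply lintegral_mono
        intro w
        apply ENNReal.ofReal_le_ofReal
        unfold Ffun
        have h1 : Afun c (w i0 + m) * (2:ℝ)⁻¹ ^ (n-1) ≤ 1 :=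
          mul_le_one₀ (Afun_le_one _ _) (by positivity) hK
        nlinarith [Real.exp_pos (-(a/2) * ‖w‖^2), (Afun_pos c (w i0 + m)),
          mul_pos (Afun_pos c (w i0 + m)) (show (0:ℝ) < (2:ℝ)⁻¹ ^ (n-1) by positivity)]
    _ < ⊤ := (gauss_integrable (by linarith : (0:ℝ) < a/2)).lintegral_lt_top

private lemma Ffun_lintegral_pos (n : ℕ) (a c : ℝ) (i0 : Fin d)
    (m : ℝ) : 0 < ∫⁻ w, ENNReal.ofReal (Ffun n a c i0 m w) := by
  rw [lintegral_pos_iff_support (Ffun_meas n a c i0 m)]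
  have hsupp : (Function.support fun w => ENNReal.ofReal (Ffun n a c i0 m w)) = Set.univ := by
    ext w
    simp [Function.mem_support, ENNReal.ofReal_eq_zero, not_le, Ffun_pos]
  rw [hsupp]
  exact isOpen_univ.measure_pos volume ⟨0, trivial⟩

private lemma lintegral_comp_neg {f : EuclideanSpace ℝ (Fin d) → ℝ≥0∞}
    (hf : Measurable f) : ∫⁻ w, f (-w) = ∫⁻ w, f w := by
  have h := (LinearIsometryEquiv.neg ℝ (E := EuclideanSpace ℝ (Fin d))).measurePreserving
  have := h.lintegral_comp hf
  simpa using this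

private lemma Ffun_shift (n : ℕ) (a c : ℝ) (i0 : Fin d) (m : ℝ) :
    ∫⁻ w : EuclideanSpace ℝ (Fin d),
        ENNReal.ofReal (Real.exp (-(a/2) * ‖w - m • (EuclideanSpace.single i0 (1:ℝ))‖ ^ 2) *
          (Afun c (w i0) * (2:ℝ)⁻¹ ^ (n-1)))
      = ∫⁻ w, ENNReal.ofReal (Ffun n a c i0 m w) := by
  rw [← lintegral_add_right_eq_self (fun w => ENNReal.ofReal (Ffun n a c i0 m w))
    (-(m • (EuclideanSpace.single i0 (1:ℝ))))]
  apply lintegral_congr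
  intro w
  unfold Ffun
  have h1 : ((w + -(m • EuclideanSpace.single i0 (1:ℝ))) i0) + m = w i0 := by
    simp [PiLp.add_apply, PiLp.neg_apply, PiLp.smul_apply, EuclideanSpace.single_apply]
  have h2 : w + -(m • EuclideanSpace.single i0 (1:ℝ))
      = w - m • EuclideanSpace.single i0 (1:ℝ) := (sub_eq_add_neg _ _).symm
  rw [h1, h2]

private lemma Ffun_lintegral_lt (n : ℕ) {a c m : ℝ} (i0 : Fin d)
    (ha : 0 < a) (hc : 0 < c) (hm : 0 < m) :
    ∫⁻ w, ENNReal.ofReal (Ffun n a c i0 0 w) < ∫⁻ w, ENNReal.ofReal (Ffun n a c i0 m w) := by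
  apply lintegral_strict_mono ?_ (Ffun_meas n a c i0 m).aemeasurable
    (Ffun_lintegral_lt_top n c i0 0 ha).ne
  · filter_upwards with w
    apply (ENNReal.ofReal_lt_ofReal_iff (Ffun_pos n a c i0 m w)).mpr
    unfold Ffun
    have hKpos : (0:ℝ) < (2:ℝ)⁻¹ ^ (n-1) := by positivity
    exact mul_lt_mul_of_pos_left
      (mul_lt_mul_of_pos_right (Afun_lt hc (by linarith)) hKpos) (Real.exp_pos _)
  · apply Measure.measure_univ_pos.mp
    exact isOpen_univ.measure_pos volume ⟨0, trivial⟩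

private lemma post_eval (a : ℝ) (j0 : Fin n)
    (v : EuclideanSpace ℝ (Fin d)) (w : EuclideanSpace ℝ (Fin d)) :
    logisticUnnormPost a⁻¹ (fun i => (if i = j0 then v else 0, (1:ℝ))) w
      = Real.exp (-(a/2) * ‖w‖ ^ 2) * ((1 + Real.exp (-⟪w, v⟫))⁻¹ * (2:ℝ)⁻¹ ^ (n - 1)) := by
  unfold logisticUnnormPost
  have h1 : -‖w‖ ^ 2 / (2 * a⁻¹) = -(a/2) * ‖w‖ ^ 2 := by field_simp
  rw [h1]
  congr 1
  have h2 : ∀ i : Fin n,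
      (1 + Real.exp (-((fun i => (if i = j0 then v else 0, (1:ℝ))) i).2 *
        ⟪w, ((fun i => (if i = j0 then v else 0, (1:ℝ))) i).1⟫))⁻¹
      = if i = j0 then (1 + Real.exp (-⟪w, v⟫))⁻¹ else 2⁻¹ := by
    intro i
    by_cases h : i = j0 <;> simp [h] <;> norm_num
  rw [Finset.prod_congr rfl (fun i _ => h2 i)]
  rw [← Finset.mul_prod_erase Finset.univ _ (Finset.mem_univ j0), if_pos rfl]
  congr 1
  rw [Finset.prod_congr rfl (fun i hi => if_neg (Finset.ne_of_mem_erase hi)), Finset.prod_const,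
    Finset.card_erase_of_mem (Finset.mem_univ j0), Finset.card_univ, Fintype.card_fin]

private lemma key_pointwise (n : ℕ) {a c l : ℝ} (i0 : Fin d)
    (ha : 0 < a) (w : EuclideanSpace ℝ (Fin d)) :
    (Ffun n a c i0 0 w) ^ l *
      (Real.exp (-(a/2) * ‖w‖ ^ 2) * (Afun c (-(w i0)) * (2:ℝ)⁻¹ ^ (n-1))) ^ (1 - l)
    = Real.exp ((l-1)^2 * c^2 / (2*a)) *
        (Real.exp (-(a/2) * ‖w - ((l-1)*c/a) • EuclideanSpace.single i0 (1:ℝ)‖ ^ 2) *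
          (Afun c (w i0) * (2:ℝ)⁻¹ ^ (n-1))) := by
  have hKpos : (0:ℝ) < (2:ℝ)⁻¹ ^ (n-1) := by positivity
  have hEpos : (0:ℝ) < Real.exp (-(a/2) * ‖w‖ ^ 2) := Real.exp_pos _
  have hPpos : (0:ℝ) < Real.exp (-(a/2) * ‖w‖ ^ 2) * (2:ℝ)⁻¹ ^ (n-1) := by positivity
  have hF0 : Ffun n a c i0 0 w
      = (Real.exp (-(a/2) * ‖w‖ ^ 2) * (2:ℝ)⁻¹ ^ (n-1)) * Afun c (w i0) := by
    unfold Ffun; rw [add_zero]; ring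
  have hG : Real.exp (-(a/2) * ‖w‖ ^ 2) * (Afun c (-(w i0)) * (2:ℝ)⁻¹ ^ (n-1))
      = (Real.exp (-(a/2) * ‖w‖ ^ 2) * (2:ℝ)⁻¹ ^ (n-1)) * Afun c (-(w i0)) := by ring
  rw [hF0, hG]
  rw [Real.mul_rpow hPpos.le (Afun_pos c (w i0)).le,
    Real.mul_rpow hPpos.le (Afun_pos c (-(w i0))).le]
  rw [mul_mul_mul_comm]
  have hPP : (Real.exp (-(a/2) * ‖w‖ ^ 2) * (2:ℝ)⁻¹ ^ (n-1)) ^ l *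
      (Real.exp (-(a/2) * ‖w‖ ^ 2) * (2:ℝ)⁻¹ ^ (n-1)) ^ (1-l)
      = Real.exp (-(a/2) * ‖w‖ ^ 2) * (2:ℝ)⁻¹ ^ (n-1) := by
    rw [← Real.rpow_add hPpos, show l + (1-l) = 1 by ring, Real.rpow_one]
  rw [hPP]
  have hAt : Afun c (w i0) ^ l = Afun c (w i0) * Afun c (w i0) ^ (l-1) := by
    conv_lhs => rw [show l = 1 + (l-1) by ring]
    rw [Real.rpow_add (Afun_pos c (w i0)), Real.rpow_one]
  have hAmt : Afun c (-(w i0)) ^ (1-l) = (Afun c (-(w i0)) ^ (l-1))⁻¹ := by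
    rw [show (1-l) = -(l-1) by ring, Real.rpow_neg (Afun_pos c (-(w i0))).le]
  rw [hAt, hAmt]
  have hdiv : Afun c (w i0) ^ (l-1) * (Afun c (-(w i0)) ^ (l-1))⁻¹
      = Real.exp ((c * w i0) * (l-1)) := by
    rw [← div_eq_mul_inv, ← Real.div_rpow (Afun_pos c (w i0)).le (Afun_pos c (-(w i0))).le,
      Afun_ratio, ← Real.exp_mul]
  have hnorm : ‖w - ((l-1)*c/a) • EuclideanSpace.single i0 (1:ℝ)‖ ^ 2
      = ‖w‖ ^ 2 - 2*(((l-1)*c/a) * w i0) + ((l-1)*c/a)^2 := by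
    rw [norm_sub_sq_real, real_inner_smul_right]
    have h1 : ⟪w, EuclideanSpace.single i0 (1:ℝ)⟫ = w i0 := by
      rw [EuclideanSpace.inner_single_right]; simp
    rw [h1, norm_smul, EuclideanSpace.norm_single]
    rw [norm_one, mul_one, Real.norm_eq_abs, sq_abs]
  have hexp : Real.exp (-(a/2) * ‖w‖ ^ 2) * Real.exp ((c * w i0) * (l-1))
      = Real.exp ((l-1)^2*c^2/(2*a)) *
        Real.exp (-(a/2) * ‖w - ((l-1)*c/a) • EuclideanSpace.single i0 (1:ℝ)‖ ^ 2) := by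
    rw [← Real.exp_add, ← Real.exp_add]
    congr 1
    rw [hnorm]
    field_simp
    ring
  rw [mul_assoc (Afun c (w i0)), hdiv]
  linear_combination Afun c (w i0) * (2:ℝ)⁻¹ ^ (n-1) * hexp

theorem logistic_regression_rdp_lower_bound
    (hd : 1 < d) (hn : 1 ≤ n) (c β : ℝ) (hc : 0 < c) (hβ : 0 < β) :
    ∃ D D' : Fin n → EuclideanSpace ℝ (Fin d) × ℝ,
      (∀ i, ‖(D i).1‖ ≤ c ∧ (D i).2 ∈ ({-1, 1} : Set ℝ)) ∧
      (∀ i, ‖(D' i).1‖ ≤ c ∧ (D' i).2 ∈ ({-1, 1} : Set ℝ)) ∧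
      Neighboring D D' ∧
      ∃ lam₀ : ℝ, ∀ lam : ℕ, lam₀ < (lam : ℝ) →
        ((c ^ 2 * ((lam : ℝ) - 1) / (2 * n * β) : ℝ) : EReal) <
          renyiDiv volume (logisticPostDens ((n * β)⁻¹) D)
            (logisticPostDens ((n * β)⁻¹) D') (lam : ℝ) := by
  have hd0 : 0 < d := by omega
  have hn0 : 0 < n := hn
  have hnr : (0:ℝ) < n := by exact_mod_cast hn0
  have ha : (0:ℝ) < (n:ℝ) * β := mul_pos hnr hβ
  set a : ℝ := (n:ℝ) * β with ha_def
  set i0 : Fin d := ⟨0, hd0⟩ with hi0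
  set j0 : Fin n := ⟨0, hn0⟩ with hj0
  set e0 : EuclideanSpace ℝ (Fin d) := EuclideanSpace.single i0 (1:ℝ) with he0
  have he0norm : ‖e0‖ = 1 := by rw [he0, EuclideanSpace.norm_single, norm_one]
  refine ⟨fun i => (if i = j0 then c • e0 else 0, 1),
          fun i => (if i = j0 then -(c • e0) else 0, 1), ?_, ?_, ?_, 1, ?_⟩
  · intro i
    refine ⟨?_, by simp⟩
    by_cases h : i = j0 <;>
      simp [h, norm_smul, he0norm, abs_of_pos hc, hc.le]
  · intro i
    refine ⟨?_, by simp⟩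
    by_cases h : i = j0 <;>
      simp [h, norm_smul, he0norm, abs_of_pos hc, hc.le]
  · refine ⟨j0, fun i hi => by simp [hi], ?_⟩
    simp only [if_pos rfl]
    intro hcontra
    have h2 : c • e0 = -(c • e0) := congrArg Prod.fst hcontra
    have h3 := congrArg (fun v : EuclideanSpace ℝ (Fin d) => v i0) h2
    have h1 : (c • e0) i0 = c := by
      simp [he0, PiLp.smul_apply, EuclideanSpace.single_apply]
    simp only [PiLp.neg_apply, h1] at h3
    linarith
  · intro lam hlam
    set l : ℝ := (lam : ℝ) with hl_def
    have hl : 1 < l := hlam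
    have hl1 : 0 < l - 1 := by linarith
    set m : ℝ := (l-1)*c/a with hm_def
    have hm : 0 < m := by positivity
    set B : ℝ := (l-1)^2 * c^2 / (2*a) with hB_def
    -- identify the unnormalized posteriors
    have hin : ∀ w : EuclideanSpace ℝ (Fin d), ⟪w, c • e0⟫ = c * w i0 := by
      intro w
      rw [real_inner_smul_right, he0, EuclideanSpace.inner_single_right]
      simp
    have hD : ∀ w, logisticUnnormPost ((n:ℝ) * β)⁻¹
        (fun i => (if i = j0 then c • e0 else 0, (1:ℝ))) w = Ffun n a c i0 0 w := by
      intro w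
      rw [show ((n:ℝ) * β)⁻¹ = a⁻¹ from by rw [ha_def]]
      rw [post_eval a j0 (c • e0) w]
      unfold Ffun Afun
      rw [add_zero, hin w]
    have hD' : ∀ w, logisticUnnormPost ((n:ℝ) * β)⁻¹
        (fun i => (if i = j0 then -(c • e0) else 0, (1:ℝ))) w
        = Real.exp (-(a/2) * ‖w‖ ^ 2) * (Afun c (-(w i0)) * (2:ℝ)⁻¹ ^ (n-1)) := by
      intro w
      rw [show ((n:ℝ) * β)⁻¹ = a⁻¹ from by rw [ha_def]]
      rw [post_eval a j0 (-(c • e0)) w]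
      have hin' : ⟪w, -(c • e0)⟫ = -(c * w i0) := by rw [inner_neg_right, hin w]
      rw [hin']
      unfold Afun
      ring_nf
    set Z : ℝ≥0∞ := ∫⁻ w, ENNReal.ofReal (Ffun n a c i0 0 w) with hZ_def
    have hZ0 : Z ≠ 0 := (Ffun_lintegral_pos n a c i0 0).ne'
    have hZtop : Z ≠ ⊤ := (Ffun_lintegral_lt_top n c i0 0 ha).ne
    have hZD : (∫⁻ w', ENNReal.ofReal (logisticUnnormPost ((n:ℝ) * β)⁻¹
        (fun i => (if i = j0 then c • e0 else 0, (1:ℝ))) w')) = Z :=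
      lintegral_congr (fun w => by rw [hD w])
    have hZD' : (∫⁻ w', ENNReal.ofReal (logisticUnnormPost ((n:ℝ) * β)⁻¹
        (fun i => (if i = j0 then -(c • e0) else 0, (1:ℝ))) w')) = Z := by
      rw [lintegral_congr (fun w => by rw [hD' w])]
      rw [hZ_def, ← lintegral_comp_neg (Ffun_meas n a c i0 0)]
      apply lintegral_congr
      intro w
      unfold Ffun
      rw [add_zero]
      simp [PiLp.neg_apply]
    -- the main integral computation
    set Jm : ℝ≥0∞ := ∫⁻ w, ENNReal.ofReal (Ffun n a c i0 m w) with hJm_def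
    have hJ : Z < Jm := Ffun_lintegral_lt n i0 ha hc hm
    have hInt : (∫⁻ w, (ENNReal.ofReal (Ffun n a c i0 0 w) / Z) ^ l *
        ((ENNReal.ofReal (Real.exp (-(a/2) * ‖w‖ ^ 2) *
          (Afun c (-(w i0)) * (2:ℝ)⁻¹ ^ (n-1)))) / Z) ^ (1-l))
        = ENNReal.ofReal (Real.exp B) * Jm * Z⁻¹ := by
      have hZinv0 : Z⁻¹ ≠ 0 := ENNReal.inv_ne_zero.mpr hZtop
      have hZinvtop : Z⁻¹ ≠ ⊤ := ENNReal.inv_ne_top.mpr hZ0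
      calc (∫⁻ w, (ENNReal.ofReal (Ffun n a c i0 0 w) / Z) ^ l *
            ((ENNReal.ofReal (Real.exp (-(a/2) * ‖w‖ ^ 2) *
              (Afun c (-(w i0)) * (2:ℝ)⁻¹ ^ (n-1)))) / Z) ^ (1-l))
          = ∫⁻ w, ENNReal.ofReal (Real.exp B *
              (Real.exp (-(a/2) * ‖w - m • EuclideanSpace.single i0 (1:ℝ)‖ ^ 2) *
                (Afun c (w i0) * (2:ℝ)⁻¹ ^ (n-1)))) * Z⁻¹ := by
            apply lintegral_congr
            intro w
            rw [div_eq_mul_inv, div_eq_mul_inv,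
              ENNReal.mul_rpow_of_ne_top ofReal_ne_top hZinvtop,
              ENNReal.mul_rpow_of_ne_top ofReal_ne_top hZinvtop,
              mul_mul_mul_comm,
              ← ENNReal.rpow_add l (1-l) hZinv0 hZinvtop,
              show l + (1-l) = 1 by ring, ENNReal.rpow_one]
            congr 1
            rw [ENNReal.ofReal_rpow_of_pos (Ffun_pos n a c i0 0 w),
              ENNReal.ofReal_rpow_of_pos (by
                have := Afun_pos c (-(w i0)); positivity),
              ← ENNReal.ofReal_mul (Real.rpow_nonneg (Ffun_pos n a c i0 0 w).le _),
              key_pointwise n i0 ha w]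
        _ = (∫⁻ w, ENNReal.ofReal (Real.exp B *
              (Real.exp (-(a/2) * ‖w - m • EuclideanSpace.single i0 (1:ℝ)‖ ^ 2) *
                (Afun c (w i0) * (2:ℝ)⁻¹ ^ (n-1))))) * Z⁻¹ := by
            apply lintegral_mul_const
            apply Measurable.ennreal_ofReal
            apply Continuous.measurable
            apply continuous_const.mul
            apply Continuous.mul
            · fun_prop
            · exact ((Afun_cont c).comp (by fun_prop : Continuous fun w : EuclideanSpace ℝ (Fin d) => w i0)).mul continuous_const
        _ = ENNReal.ofReal (Real.exp B) * Jm * Z⁻¹ := by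
            congr 1
            rw [hJm_def, ← Ffun_shift n a c i0 m]
            rw [← lintegral_const_mul _ (Gshift_meas n a c i0 m)]
            apply lintegral_congr
            intro w
            rw [← ENNReal.ofReal_mul (Real.exp_pos _).le]
    -- strict lower bound on the integral
    have hNgt : ENNReal.ofReal (Real.exp B) < ENNReal.ofReal (Real.exp B) * Jm * Z⁻¹ := by
      have h1 : ENNReal.ofReal (Real.exp B) ≠ 0 :=
        (ENNReal.ofReal_pos.mpr (Real.exp_pos _)).ne'
      calc ENNReal.ofReal (Real.exp B)
          = ENNReal.ofReal (Real.exp B) * Z * Z⁻¹ := by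
            rw [mul_assoc, ENNReal.mul_inv_cancel hZ0 hZtop, mul_one]
        _ < ENNReal.ofReal (Real.exp B) * Jm * Z⁻¹ := by
            apply ENNReal.mul_lt_mul_left (ENNReal.inv_ne_zero.mpr hZtop)
              (ENNReal.inv_ne_top.mpr hZ0)
            exact ENNReal.mul_lt_mul_right h1 ofReal_ne_top hJ
    -- conclude
    rw [renyiDiv]
    simp only [logisticPostDens]
    rw [hZD, hZD']
    have hIntegrand : (∫⁻ ω, (ENNReal.ofReal (logisticUnnormPost ((n:ℝ) * β)⁻¹
        (fun i => (if i = j0 then c • e0 else 0, (1:ℝ))) ω) / Z) ^ l *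
        ((ENNReal.ofReal (logisticUnnormPost ((n:ℝ) * β)⁻¹
          (fun i => (if i = j0 then -(c • e0) else 0, (1:ℝ))) ω)) / Z) ^ (1-l))
        = ENNReal.ofReal (Real.exp B) * Jm * Z⁻¹ := by
      rw [← hInt]
      apply lintegral_congr
      intro w
      rw [hD w, hD' w]
    rw [hIntegrand]
    have hlog : (B : EReal) < ENNReal.log (ENNReal.ofReal (Real.exp B) * Jm * Z⁻¹) := by
      calc (B : EReal) = ENNReal.log (ENNReal.ofReal (Real.exp B)) := by
            rw [ENNReal.log_ofReal_of_pos (Real.exp_pos _), Real.log_exp]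
        _ < _ := ENNReal.log_lt_log_iff.mpr hNgt
    have harith : (l-1)⁻¹ * B = c ^ 2 * (l - 1) / (2 * (n:ℝ) * β) := by
      rw [hB_def, ha_def]
      field_simp
    have := ereal_mul_lt_mul ((l-1)⁻¹) B (by positivity) hlog
    rw [harith] at this
    exact this
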